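/- Let A and B be n×n complex positive semidefinite matrices and let 1 ≤ k ≤ n. Then ∏_{t=1}^k λ_t(A + B) ≥ ∏_{t=1}^k λ_t(A) + ∏_{t=1}^k λ_{n−t+1}(B) + (2^k − 2) · ∏_{t=1}^k (λ_t(A) · λ_{n−t+1}(B))^{1/2}. -/

import Mathlib

open Matrix
open scoped ComplexOrder

/-- The `t`-th largest eigenvalue (0-indexed) of a Hermitian matrix
(junk value `0` if the matrix is not Hermitian). -/
noncomputable def eigval {n : ℕ} (A : Matrix (Fin n) (Fin n) ℂ) (t : Fin n) : ℝ :=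
  if h : A.IsHermitian then h.eigenvalues (Tuple.sort h.eigenvalues t.rev) else 0

/-- The `t`-th largest singular value (0-indexed) of a square complex matrix. -/
noncomputable def singval {n : ℕ} (X : Matrix (Fin n) (Fin n) ℂ) (t : Fin n) : ℝ :=
  Real.sqrt (eigval (Xᴴ * X) t)

lemma sqrt_prod {k : ℕ} (f : Fin k → ℝ) (hf : ∀ i, 0 ≤ f i) :
    ∏ i, Real.sqrt (f i) = Real.sqrt (∏ i, f i) := by
  classical
  induction (Finset.univ : Finset (Fin k)) using Finset.cons_induction with
  | empty => simp
  | cons a s ha ih =>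
      rw [Finset.prod_cons, Finset.prod_cons, ih, ← Real.sqrt_mul (hf a)]

lemma scalar_L1 {k : ℕ} (hk : 0 < k) (a b : Fin k → ℝ) (ha : ∀ i, 0 ≤ a i)
    (hb : ∀ i, 0 ≤ b i) :
    (∏ i, a i) + (∏ i, b i) + ((2:ℝ) ^ k - 2) * ∏ i, Real.sqrt (a i * b i) ≤
      ∏ i, (a i + b i) := by
  classical
  have hne : (Finset.univ : Finset (Fin k)) ≠ ∅ := by
    simp [Finset.univ_eq_empty_iff, Fin.pos_iff_nonempty.mp hk]
  set g : Finset (Fin k) → ℝ := fun S => (∏ i ∈ S, a i) * ∏ i ∈ Sᶜ, b i with hg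
  have hexp : ∏ i, (a i + b i) = ∑ S : Finset (Fin k), g S := by
    rw [Finset.prod_add, Finset.powerset_univ]
    refine Finset.sum_congr rfl fun S _ => ?_
    simp only [hg, Finset.compl_eq_univ_sdiff]
  have hgnonneg : ∀ S, 0 ≤ g S := fun S =>
    mul_nonneg (Finset.prod_nonneg fun i _ => ha i) (Finset.prod_nonneg fun i _ => hb i)
  set c : ℝ := ∏ i, Real.sqrt (a i * b i) with hc
  have hpair : ∀ S : Finset (Fin k), 2 * c ≤ g S + g Sᶜ := by
    intro S
    have h1 : g S * g Sᶜ = (∏ i, a i) * ∏ i, b i := by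
      have hbS := Finset.prod_mul_prod_compl Sᶜ b
      rw [compl_compl] at hbS
      rw [hg]
      simp only [compl_compl]
      rw [mul_mul_mul_comm, Finset.prod_mul_prod_compl, ← hbS]
    have h2 : c = Real.sqrt (g S * g Sᶜ) := by
      rw [hc, sqrt_prod _ (fun i => mul_nonneg (ha i) (hb i)), Finset.prod_mul_distrib, h1]
    have h3 := Real.sq_sqrt (hgnonneg S)
    have h4 := Real.sq_sqrt (hgnonneg Sᶜ)
    have h5 : Real.sqrt (g S * g Sᶜ) = Real.sqrt (g S) * Real.sqrt (g Sᶜ) :=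
      Real.sqrt_mul (hgnonneg S) _
    nlinarith [sq_nonneg (Real.sqrt (g S) - Real.sqrt (g Sᶜ)), Real.sqrt_nonneg (g S),
      Real.sqrt_nonneg (g Sᶜ)]
  -- split the sum
  set P : Finset (Finset (Fin k)) := {Finset.univ, ∅} with hP
  have hPsub : P ⊆ Finset.univ := Finset.subset_univ _
  have hsplit : ∑ S : Finset (Fin k), g S
      = (∑ S ∈ Finset.univ \ P, g S) + ∑ S ∈ P, g S := (Finset.sum_sdiff hPsub).symm
  have hPsum : ∑ S ∈ P, g S = (∏ i, a i) + ∏ i, b i := by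
    rw [hP, Finset.sum_pair hne]
    simp [hg]
  have hmem : ∀ S, S ∈ Finset.univ \ P ↔ (S ≠ Finset.univ ∧ S ≠ ∅) := by
    intro S; simp [hP, Finset.mem_sdiff]
  have hcompl : ∀ S ∈ Finset.univ \ P, Sᶜ ∈ Finset.univ \ P := by
    intro S hS
    rw [hmem] at hS ⊢
    constructor
    · intro h; apply hS.2; rw [← compl_compl S, h, Finset.compl_univ]
    · intro h; apply hS.1; rw [← compl_compl S, h, Finset.compl_empty]
  have hflip : ∑ S ∈ Finset.univ \ P, g Sᶜ = ∑ S ∈ Finset.univ \ P, g S := by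
    refine Finset.sum_nbij' (fun S => Sᶜ) (fun S => Sᶜ) hcompl hcompl
      (fun S _ => compl_compl S) (fun S _ => compl_compl S) (fun S _ => rfl)
  have hcard : (Finset.univ \ P).card = 2 ^ k - 2 := by
    rw [Finset.card_sdiff_of_subset hPsub, hP]
    have : ({Finset.univ, ∅} : Finset (Finset (Fin k))).card = 2 := by
      rw [Finset.card_insert_of_notMem (by simpa using hne), Finset.card_singleton]
    rw [this, Finset.card_univ, Fintype.card_finset, Fintype.card_fin]
  have h2le : 2 ≤ 2 ^ k := by
    calc (2:ℕ) = 2 ^ 1 := by norm_num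
    _ ≤ 2 ^ k := Nat.pow_le_pow_right (by norm_num) hk
  have hrest : ((2:ℝ) ^ k - 2) * c ≤ ∑ S ∈ Finset.univ \ P, g S := by
    have h2 : 2 * ∑ S ∈ Finset.univ \ P, g S = ∑ S ∈ Finset.univ \ P, (g S + g Sᶜ) := by
      rw [Finset.sum_add_distrib, hflip]; ring
    have h3 : ∑ S ∈ Finset.univ \ P, (2 * c) ≤ ∑ S ∈ Finset.univ \ P, (g S + g Sᶜ) :=
      Finset.sum_le_sum fun S _ => hpair S
    rw [Finset.sum_const, hcard] at h3
    have : ((2 ^ k - 2 : ℕ) : ℝ) = (2:ℝ) ^ k - 2 := by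
      push_cast [Nat.cast_sub h2le]; ring
    rw [nsmul_eq_mul, this] at h3
    nlinarith
  rw [hexp, hsplit, hPsum]
  linarith

lemma exists_kernel {q p : ℕ} (hqp : q < p) (H : Matrix (Fin q) (Fin p) ℂ) :
    ∃ y : Fin p → ℂ, y ≠ 0 ∧ H *ᵥ y = 0 := by
  classical
  set H' : Matrix (Fin p) (Fin p) ℂ :=
    fun i j => if h : (i : ℕ) < q then H ⟨i, h⟩ j else 0 with hH'
  have hdet : H'.det = 0 := by
    apply Matrix.det_eq_zero_of_row_eq_zero ⟨q, hqp⟩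
    intro j; simp [hH']
  obtain ⟨y, hy0, hy⟩ := Matrix.exists_mulVec_eq_zero_iff.mpr hdet
  refine ⟨y, hy0, ?_⟩
  funext r
  have := congrFun hy ⟨r, lt_trans r.2 hqp⟩
  simpa [Matrix.mulVec, dotProduct, hH', r.2, Fin.eta] using this

open Matrix
open scoped ComplexOrder

lemma eigval_eq {m : ℕ} {M : Matrix (Fin m) (Fin m) ℂ} (hM : M.IsHermitian) (t : Fin m) :
    eigval M t = hM.eigenvalues (Tuple.sort hM.eigenvalues t.rev) := dif_pos hM

lemma eigval_antitone {m : ℕ} {M : Matrix (Fin m) (Fin m) ℂ} (hM : M.IsHermitian) :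
    Antitone (eigval M) := by
  intro i j hij
  rw [eigval_eq hM, eigval_eq hM]
  exact Tuple.monotone_sort hM.eigenvalues (Fin.rev_le_rev.mpr hij)

lemma eigval_nonneg {m : ℕ} {M : Matrix (Fin m) (Fin m) ℂ} (hM : M.PosSemidef) (t : Fin m) :
    0 ≤ eigval M t := by
  rw [eigval_eq hM.1]; exact hM.eigenvalues_nonneg _

lemma prod_eigval_eq {m : ℕ} {M : Matrix (Fin m) (Fin m) ℂ} (hM : M.IsHermitian) :
    ∏ t : Fin m, eigval M t = ∏ i : Fin m, hM.eigenvalues i := by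
  simp_rw [eigval_eq hM]
  exact Equiv.prod_comp (Fin.revPerm.trans (Tuple.sort hM.eigenvalues)) hM.eigenvalues

lemma det_eq_prod_eigval {m : ℕ} {M : Matrix (Fin m) (Fin m) ℂ} (hM : M.IsHermitian) :
    M.det = ((∏ t : Fin m, eigval M t : ℝ) : ℂ) := by
  rw [prod_eigval_eq hM, hM.det_eq_prod_eigenvalues]
  push_cast
  rfl

/-- compression of a conjugation by a submatrix of columns -/
lemma submatrix_conj_mul {N P : ℕ} (W : Matrix (Fin N) (Fin N) ℂ)
    (A : Matrix (Fin N) (Fin N) ℂ) (e : Fin P → Fin N) :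
    (W.submatrix id e)ᴴ * A * W.submatrix id e = (Wᴴ * A * W).submatrix e e := by
  ext i j
  simp only [Matrix.mul_apply, Matrix.submatrix_apply, Matrix.conjTranspose_apply, id_eq]

lemma one_submatrix_inj {N P : ℕ} {e : Fin P → Fin N} (he : Function.Injective e) :
    (1 : Matrix (Fin N) (Fin N) ℂ).submatrix e e = 1 := by
  ext i j
  simp [Matrix.submatrix_apply, Matrix.one_apply, he.eq_iff]

lemma diagonal_submatrix_inj {N P : ℕ} {e : Fin P → Fin N} (he : Function.Injective e)
    (d : Fin N → ℂ) : (diagonal d).submatrix e e = diagonal (d ∘ e) := by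
  ext i j
  by_cases h : i = j
  · subst h; simp [Matrix.submatrix_apply, Matrix.diagonal_apply]
  · simp only [Matrix.submatrix_apply, Matrix.diagonal_apply, Function.comp_apply,
      if_neg h, if_neg (fun hh => h (he hh))]

lemma quad_eq {m p : ℕ} (M : Matrix (Fin m) (Fin m) ℂ) (F : Matrix (Fin m) (Fin p) ℂ)
    (d : Fin p → ℝ) (hFMF : Fᴴ * M * F = diagonal (fun i => (d i : ℂ)))
    (y : Fin p → ℂ) :
    star (F *ᵥ y) ⬝ᵥ M *ᵥ (F *ᵥ y) =
      ((∑ i, d i * Complex.normSq (y i) : ℝ) : ℂ) := by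
  have h1 : star (F *ᵥ y) ⬝ᵥ M *ᵥ (F *ᵥ y) = star y ⬝ᵥ (Fᴴ * M * F) *ᵥ y := by
    rw [Matrix.star_mulVec, ← Matrix.dotProduct_mulVec, Matrix.mulVec_mulVec,
      Matrix.mulVec_mulVec]
  rw [h1, hFMF]
  simp only [dotProduct, Matrix.mulVec_diagonal, Pi.star_apply]
  push_cast
  refine Finset.sum_congr rfl fun i _ => ?_
  rw [show star (y i) * ((d i : ℂ) * y i)
      = (d i : ℂ) * (star (y i) * y i) by ring, Complex.star_def,
    ← Complex.normSq_eq_conj_mul_self]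
lemma core {n k p q : ℕ} (hqp : q < p)
    (M : Matrix (Fin n) (Fin n) ℂ) (U : Matrix (Fin n) (Fin k) ℂ)
    (hU : Uᴴ * U = 1)
    (V : Matrix (Fin n) (Fin n) ℂ) (μ : Fin n → ℝ)
    (hV1 : Vᴴ * V = 1) (hV2 : V * Vᴴ = 1)
    (hVMV : Vᴴ * M * V = diagonal (fun i => (μ i : ℂ)))
    (W : Matrix (Fin k) (Fin k) ℂ) (ν : Fin k → ℝ)
    (hW1 : Wᴴ * W = 1)
    (hWCW : Wᴴ * (Uᴴ * M * U) * W = diagonal (fun i => (ν i : ℂ)))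
    (e : Fin p → Fin k) (he : Function.Injective e)
    (g : Fin q → Fin n) (a b : ℝ)
    (ha : ∀ j, a ≤ ν (e j)) (hb : ∀ i, (∀ s, g s ≠ i) → μ i ≤ b) : a ≤ b := by
  classical
  set F : Matrix (Fin n) (Fin p) ℂ := U * W.submatrix id e with hF
  have key : ∀ (M' : Matrix (Fin n) (Fin n) ℂ),
      Fᴴ * M' * F = (Wᴴ * (Uᴴ * M' * U) * W).submatrix e e := by
    intro M'
    rw [hF, ← submatrix_conj_mul]
    simp only [conjTranspose_mul, Matrix.mul_assoc]
  have hFMF : Fᴴ * M * F = diagonal (fun j => ((ν (e j) : ℝ) : ℂ)) := by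
    rw [key M, hWCW, diagonal_submatrix_inj he]
    rfl
  have hF1 : Fᴴ * (1 : Matrix (Fin n) (Fin n) ℂ) * F
      = diagonal (fun _ : Fin p => ((1:ℝ) : ℂ)) := by
    rw [key 1]
    have : Uᴴ * (1 : Matrix (Fin n) (Fin n) ℂ) * U = 1 := by rw [Matrix.mul_one, hU]
    rw [this, Matrix.mul_one, hW1, one_submatrix_inj he]
    simp [Matrix.diagonal_one]
  set G : Matrix (Fin q) (Fin n) ℂ := (Vᴴ).submatrix g id with hG
  obtain ⟨y, hy0, hker⟩ := exists_kernel hqp (G * F)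
  set x : Fin n → ℂ := F *ᵥ y with hx
  set z : Fin n → ℂ := Vᴴ *ᵥ x with hzdef
  have hz : ∀ s : Fin q, z (g s) = 0 := by
    intro s
    have h1 : G *ᵥ x = 0 := by rw [hx, Matrix.mulVec_mulVec, hker]
    have h2 : (G *ᵥ x) s = z (g s) := by
      simp [hG, hzdef, Matrix.mulVec, dotProduct, Matrix.submatrix_apply]
    rw [← h2, h1]; rfl
  have E3 : x = V *ᵥ z := by
    rw [hzdef, Matrix.mulVec_mulVec, hV2, Matrix.one_mulVec]
  have E1 : star x ⬝ᵥ M *ᵥ x = ((∑ j, ν (e j) * Complex.normSq (y j) : ℝ) : ℂ) :=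
    quad_eq M F (fun j => ν (e j)) hFMF y
  have E2 : star x ⬝ᵥ x = ((∑ j, (1:ℝ) * Complex.normSq (y j) : ℝ) : ℂ) := by
    have := quad_eq (1 : Matrix (Fin n) (Fin n) ℂ) F (fun _ => (1:ℝ)) hF1 y
    rwa [Matrix.one_mulVec] at this
  have hV1' : Vᴴ * (1 : Matrix (Fin n) (Fin n) ℂ) * V
      = diagonal (fun _ : Fin n => ((1:ℝ) : ℂ)) := by
    rw [Matrix.mul_one, hV1]; simp [Matrix.diagonal_one]
  have E4 : star x ⬝ᵥ M *ᵥ x = ((∑ i, μ i * Complex.normSq (z i) : ℝ) : ℂ) := by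
    rw [E3]; exact quad_eq M V μ hVMV z
  have E5 : star x ⬝ᵥ x = ((∑ i, (1:ℝ) * Complex.normSq (z i) : ℝ) : ℂ) := by
    rw [E3]
    have := quad_eq (1 : Matrix (Fin n) (Fin n) ℂ) V (fun _ => (1:ℝ)) hV1' z
    rwa [Matrix.one_mulVec] at this
  have hSYZ : ∑ j, Complex.normSq (y j) = ∑ i, Complex.normSq (z i) := by
    have := Complex.ofReal_inj.mp (E2.symm.trans E5)
    simpa using this
  have hmid : ∑ j, ν (e j) * Complex.normSq (y j)
      = ∑ i, μ i * Complex.normSq (z i) :=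
    Complex.ofReal_inj.mp (E1.symm.trans E4)
  have hSY : 0 < ∑ j, Complex.normSq (y j) := by
    obtain ⟨j, hj⟩ := Function.ne_iff.mp hy0
    exact Finset.sum_pos' (fun i _ => Complex.normSq_nonneg _)
      ⟨j, Finset.mem_univ j, Complex.normSq_pos.mpr hj⟩
  have hlow : a * ∑ j, Complex.normSq (y j) ≤ ∑ j, ν (e j) * Complex.normSq (y j) := by
    rw [Finset.mul_sum]
    exact Finset.sum_le_sum fun j _ =>
      mul_le_mul_of_nonneg_right (ha j) (Complex.normSq_nonneg _)
  have hup : ∑ i, μ i * Complex.normSq (z i) ≤ b * ∑ i, Complex.normSq (z i) := by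
    rw [Finset.mul_sum]
    refine Finset.sum_le_sum fun i _ => ?_
    by_cases hgi : ∃ s, g s = i
    · obtain ⟨s, hs⟩ := hgi
      rw [← hs, hz s]
      simp
    · push_neg at hgi
      exact mul_le_mul_of_nonneg_right (hb i hgi) (Complex.normSq_nonneg _)
  have : a * ∑ j, Complex.normSq (y j) ≤ b * ∑ j, Complex.normSq (y j) := by
    rw [hSYZ]; rw [hSYZ] at hlow
    calc a * ∑ i, Complex.normSq (z i) ≤ ∑ j, ν (e j) * Complex.normSq (y j) := hlow
    _ = ∑ i, μ i * Complex.normSq (z i) := hmid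
    _ ≤ b * ∑ i, Complex.normSq (z i) := hup
  exact le_of_mul_le_mul_right this hSY
lemma herm_diag {m : ℕ} {M : Matrix (Fin m) (Fin m) ℂ} (hM : M.IsHermitian) :
    (hM.eigenvectorUnitary : Matrix (Fin m) (Fin m) ℂ)ᴴ * M *
      (hM.eigenvectorUnitary : Matrix (Fin m) (Fin m) ℂ) =
      diagonal (fun i => ((hM.eigenvalues i : ℝ) : ℂ)) := by
  have h := hM.conjStarAlgAut_star_eigenvectorUnitary
  simp [Matrix.star_eq_conjTranspose] at h
  exact h

lemma unit1 {m : ℕ} {M : Matrix (Fin m) (Fin m) ℂ} (hM : M.IsHermitian) :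
    (hM.eigenvectorUnitary : Matrix (Fin m) (Fin m) ℂ)ᴴ *
      (hM.eigenvectorUnitary : Matrix (Fin m) (Fin m) ℂ) = 1 := by
  rw [← Matrix.star_eq_conjTranspose]
  exact Matrix.mem_unitaryGroup_iff'.mp hM.eigenvectorUnitary.2

lemma unit2 {m : ℕ} {M : Matrix (Fin m) (Fin m) ℂ} (hM : M.IsHermitian) :
    (hM.eigenvectorUnitary : Matrix (Fin m) (Fin m) ℂ) *
      (hM.eigenvectorUnitary : Matrix (Fin m) (Fin m) ℂ)ᴴ = 1 := by
  rw [← Matrix.star_eq_conjTranspose]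
  exact Matrix.mem_unitaryGroup_iff.mp hM.eigenvectorUnitary.2

lemma eigval_compression_le {n k : ℕ} (hkn : k ≤ n) {M : Matrix (Fin n) (Fin n) ℂ}
    (hM : M.IsHermitian) (U : Matrix (Fin n) (Fin k) ℂ) (hU : Uᴴ * U = 1) (t : Fin k) :
    eigval (Uᴴ * M * U) t ≤ eigval M (Fin.castLE hkn t) := by
  have hC : (Uᴴ * M * U).IsHermitian := Matrix.isHermitian_conjTranspose_mul_mul U hM
  set σ := Tuple.sort hM.eigenvalues with hσ
  set τ := Tuple.sort hC.eigenvalues with hτ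
  have ht1 : (t : ℕ) + 1 ≤ k := t.2
  have ht2 : (t : ℕ) ≤ n := le_trans (le_of_lt t.2) hkn
  refine core (p := (t:ℕ)+1) (q := (t:ℕ)) (Nat.lt_succ_self _) M U hU
    _ hM.eigenvalues (unit1 hM) (unit2 hM) (herm_diag hM)
    _ hC.eigenvalues (unit1 hC) (herm_diag hC)
    (fun j => τ ((Fin.castLE ht1 j).rev))
    (τ.injective.comp (Fin.rev_injective.comp (Fin.castLE_injective ht1)))
    (fun s => σ ((Fin.castLE ht2 s).rev)) _ _ ?_ ?_
  · intro j
    have h1 : hC.eigenvalues (τ ((Fin.castLE ht1 j).rev)) = eigval (Uᴴ * M * U) (Fin.castLE ht1 j) :=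
      (eigval_eq hC _).symm
    rw [h1]
    exact eigval_antitone hC (by exact Fin.mk_le_mk.mpr (Nat.lt_succ_iff.mp j.2))
  · intro i hi
    set r : Fin n := (σ.symm i).rev with hr
    have hir : σ r.rev = i := by rw [hr, Fin.rev_rev]; simp
    have hrt : (t : ℕ) ≤ (r : ℕ) := by
      by_contra h
      push_neg at h
      refine hi ⟨(r : ℕ), h⟩ ?_
      show σ ((Fin.castLE ht2 ⟨(r : ℕ), h⟩).rev) = i
      have he : Fin.castLE ht2 ⟨(r : ℕ), h⟩ = r := rfl
      rw [he, hir]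
    have h2 : hM.eigenvalues i = eigval M r := by rw [eigval_eq hM, hir]
    rw [h2]
    exact eigval_antitone hM (Fin.mk_le_mk.mpr hrt)

lemma eigval_compression_ge {n k : ℕ} (hkn : k ≤ n) {M : Matrix (Fin n) (Fin n) ℂ}
    (hM : M.IsHermitian) (U : Matrix (Fin n) (Fin k) ℂ) (hU : Uᴴ * U = 1) (t : Fin k) :
    eigval M ((Fin.castLE hkn t).rev) ≤ eigval (Uᴴ * M * U) t.rev := by
  have hC : (Uᴴ * M * U).IsHermitian := Matrix.isHermitian_conjTranspose_mul_mul U hM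
  set σ := Tuple.sort hM.eigenvalues with hσ
  set τ := Tuple.sort hC.eigenvalues with hτ
  have ht1 : (t : ℕ) + 1 ≤ k := t.2
  have ht2 : (t : ℕ) ≤ n := le_trans (le_of_lt t.2) hkn
  have hnegC : Uᴴ * (-M) * U = -(Uᴴ * M * U) := by
    rw [Matrix.mul_neg, Matrix.neg_mul]
  have hVMV : (hM.eigenvectorUnitary : Matrix (Fin n) (Fin n) ℂ)ᴴ * (-M) *
      (hM.eigenvectorUnitary : Matrix (Fin n) (Fin n) ℂ)
      = diagonal (fun i => ((-(hM.eigenvalues i) : ℝ) : ℂ)) := by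
    rw [Matrix.mul_neg, Matrix.neg_mul, herm_diag hM]
    ext i j
    rcases eq_or_ne i j with h | h
    · subst h; simp
    · simp [Matrix.diagonal_apply_ne _ h]
  have hWCW : (hC.eigenvectorUnitary : Matrix (Fin k) (Fin k) ℂ)ᴴ * (Uᴴ * (-M) * U) *
      (hC.eigenvectorUnitary : Matrix (Fin k) (Fin k) ℂ)
      = diagonal (fun i => ((-(hC.eigenvalues i) : ℝ) : ℂ)) := by
    rw [hnegC, Matrix.mul_neg, Matrix.neg_mul, herm_diag hC]
    ext i j
    rcases eq_or_ne i j with h | h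
    · subst h; simp
    · simp [Matrix.diagonal_apply_ne _ h]
  have key : -(eigval (Uᴴ * M * U) t.rev) ≤ -(eigval M ((Fin.castLE hkn t).rev)) := by
    refine core (p := (t:ℕ)+1) (q := (t:ℕ)) (Nat.lt_succ_self _) (-M) U hU
      _ (fun i => -(hM.eigenvalues i)) (unit1 hM) (unit2 hM) hVMV
      _ (fun i => -(hC.eigenvalues i)) (unit1 hC) hWCW
      (fun j => τ (Fin.castLE ht1 j))
      (τ.injective.comp (Fin.castLE_injective ht1))
      (fun s => σ (Fin.castLE ht2 s)) _ _ ?_ ?_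
    · intro j
      simp only [neg_le_neg_iff]
      have h1 : hC.eigenvalues (τ (Fin.castLE ht1 j))
          = eigval (Uᴴ * M * U) ((Fin.castLE ht1 j).rev) := by
        rw [eigval_eq hC, Fin.rev_rev]
      rw [h1]
      exact eigval_antitone hC (Fin.rev_le_rev.mpr (Fin.mk_le_mk.mpr (Nat.lt_succ_iff.mp j.2)))
    · intro i hi
      simp only [neg_le_neg_iff]
      set r : Fin n := σ.symm i with hr
      have hir : σ r = i := by rw [hr]; simp
      have hrt : (t : ℕ) ≤ (r : ℕ) := by
        by_contra h
        push_neg at h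
        refine hi ⟨(r : ℕ), h⟩ ?_
        show σ (Fin.castLE ht2 ⟨(r : ℕ), h⟩) = i
        have he : Fin.castLE ht2 ⟨(r : ℕ), h⟩ = r := rfl
        rw [he, hir]
      have h2 : eigval M ((Fin.castLE hkn t).rev)
          = hM.eigenvalues (σ (Fin.castLE hkn t)) := by
        rw [eigval_eq hM, Fin.rev_rev]
      rw [h2, ← hir]
      exact Tuple.monotone_sort hM.eigenvalues (Fin.mk_le_mk.mpr hrt)
  linarith
open scoped MatrixOrder in
lemma congr_key {k : ℕ} (X Y : Matrix (Fin k) (Fin k) ℂ) (hX : X.PosSemidef)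
    (hY : Y.PosSemidef) (hdX : X.det ≠ 0) :
    ∃ ζ : Fin k → ℝ, (∀ i, 0 ≤ ζ i) ∧
      ((∏ i, ζ i : ℝ) : ℂ) * X.det = Y.det ∧
      (X + Y).det = X.det * ∏ i, (1 + ((ζ i : ℝ) : ℂ)) := by
  classical
  set R := CFC.sqrt X with hRdef
  have hR : R.PosSemidef := (CFC.sqrt_nonneg X).posSemidef
  have hRH : Rᴴ = R := hR.1
  have hRR : R * R = X := CFC.sqrt_mul_sqrt_self X hX.nonneg
  have hdetR : R.det * R.det = X.det := by rw [← Matrix.det_mul, hRR]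
  have hRd0 : R.det ≠ 0 := by
    intro h; apply hdX; rw [← hdetR, h, zero_mul]
  have hunit : IsUnit R.det := isUnit_iff_ne_zero.mpr hRd0
  have hRinv : R * R⁻¹ = 1 := Matrix.mul_nonsing_inv _ hunit
  have hinvR : R⁻¹ * R = 1 := Matrix.nonsing_inv_mul _ hunit
  set Z := R⁻¹ * Y * R⁻¹ with hZdef
  have hinvH : (R⁻¹)ᴴ = R⁻¹ := by rw [Matrix.conjTranspose_nonsing_inv, hRH]
  have hZps : Z.PosSemidef := by
    have := hY.conjTranspose_mul_mul_same (R⁻¹)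
    rwa [hinvH] at this
  have hRZR : R * Z * R = Y := by
    rw [hZdef]
    calc R * (R⁻¹ * Y * R⁻¹) * R = (R * R⁻¹) * Y * (R⁻¹ * R) := by
          simp only [Matrix.mul_assoc]
    _ = Y := by rw [hRinv, hinvR, Matrix.one_mul, Matrix.mul_one]
  have hXY : X + Y = R * (1 + Z) * R := by
    rw [Matrix.mul_add, Matrix.add_mul, Matrix.mul_one, hRR, hRZR]
  set ζ := hZps.1.eigenvalues with hζdef
  refine ⟨ζ, hZps.eigenvalues_nonneg, ?_, ?_⟩
  · have hdetZ : Z.det = ((∏ i, ζ i : ℝ) : ℂ) := by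
      rw [hZps.1.det_eq_prod_eigenvalues]; push_cast; rfl
    have hY' : Y.det = R.det * Z.det * R.det := by
      rw [← hRZR, Matrix.det_mul, Matrix.det_mul]
    rw [hY', ← hdetR, hdetZ]; ring
  · set Wz : Matrix (Fin k) (Fin k) ℂ := (hZps.1.eigenvectorUnitary : Matrix (Fin k) (Fin k) ℂ) with hWz
    have h1 : Wzᴴ * (1 + Z) * Wz = 1 + diagonal (fun i => ((ζ i : ℝ) : ℂ)) := by
      rw [Matrix.mul_add, Matrix.add_mul, Matrix.mul_one, unit1 hZps.1, herm_diag hZps.1]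
    have hdetW : Wzᴴ.det * Wz.det = 1 := by
      rw [← Matrix.det_mul, unit1 hZps.1, Matrix.det_one]
    have h2 : (1 + Z).det = ∏ i, (1 + ((ζ i : ℝ) : ℂ)) := by
      have h3 := congrArg Matrix.det h1
      rw [Matrix.det_mul, Matrix.det_mul] at h3
      have h4 : (1 : Matrix (Fin k) (Fin k) ℂ) + diagonal (fun i => ((ζ i : ℝ) : ℂ))
          = diagonal (fun i => 1 + ((ζ i : ℝ) : ℂ)) := by
        rw [← Matrix.diagonal_one, Matrix.diagonal_add]
      rw [h4, Matrix.det_diagonal] at h3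
      calc (1 + Z).det = (Wzᴴ.det * Wz.det) * (1 + Z).det := by rw [hdetW, one_mul]
      _ = Wzᴴ.det * (1 + Z).det * Wz.det := by ring
      _ = ∏ i, (1 + ((ζ i : ℝ) : ℂ)) := h3
    rw [hXY, Matrix.det_mul, Matrix.det_mul, h2, ← hdetR]; ring

lemma det_add_psd {k : ℕ} (hk : 0 < k) (X Y : Matrix (Fin k) (Fin k) ℂ)
    (hX : X.PosSemidef) (hY : Y.PosSemidef) :
    (∏ t, eigval X t) + (∏ t, eigval Y t) +
      ((2:ℝ)^k - 2) * Real.sqrt ((∏ t, eigval X t) * ∏ t, eigval Y t) ≤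
      ∏ t, eigval (X + Y) t := by
  classical
  set PX := ∏ t, eigval X t with hPX
  set PY := ∏ t, eigval Y t with hPY
  set PXY := ∏ t, eigval (X + Y) t with hPXY
  have hXd : X.det = (PX : ℂ) := det_eq_prod_eigval hX.1
  have hYd : Y.det = (PY : ℂ) := det_eq_prod_eigval hY.1
  have hXYd : (X + Y).det = (PXY : ℂ) := det_eq_prod_eigval (hX.add hY).1
  have hPX0 : 0 ≤ PX := Finset.prod_nonneg fun t _ => eigval_nonneg hX t
  have hPY0 : 0 ≤ PY := Finset.prod_nonneg fun t _ => eigval_nonneg hY t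
  have hPXY0 : 0 ≤ PXY := Finset.prod_nonneg fun t _ => eigval_nonneg (hX.add hY) t
  have hc : (0:ℝ) ≤ (2:ℝ)^k - 2 := by
    have : (2:ℝ)^1 ≤ 2^k := pow_le_pow_right₀ (by norm_num) hk
    simpa using this
  by_cases hX0 : PX = 0
  · rw [hX0, zero_mul, Real.sqrt_zero, mul_zero, zero_add, add_zero]
    by_cases hY0 : PY = 0
    · rw [hY0]; exact hPXY0
    · obtain ⟨ζ, hζ0, _, hζ2⟩ := congr_key Y X hY hX
        (by rw [hYd]; exact_mod_cast hY0)
      rw [add_comm Y X, hXYd, hYd] at hζ2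
      have hprod : ∏ i, (1 + ((ζ i : ℝ) : ℂ)) = ((∏ i, (1 + ζ i) : ℝ) : ℂ) := by
        push_cast; rfl
      rw [hprod, ← Complex.ofReal_mul] at hζ2
      have hreal : PXY = PY * ∏ i, (1 + ζ i) := Complex.ofReal_inj.mp hζ2
      have h1 : (1:ℝ) ≤ ∏ i, (1 + ζ i) := by
        calc (1:ℝ) = ∏ _i : Fin k, 1 := by simp
        _ ≤ ∏ i, (1 + ζ i) :=
          Finset.prod_le_prod (fun i _ => zero_le_one) (fun i _ => by linarith [hζ0 i])
      nlinarith
  · obtain ⟨ζ, hζ0, hζ1, hζ2⟩ := congr_key X Y hX hY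
      (by rw [hXd]; exact_mod_cast hX0)
    rw [hXd, hYd] at hζ1
    rw [hXYd, hXd] at hζ2
    have hprod : ∏ i, (1 + ((ζ i : ℝ) : ℂ)) = ((∏ i, (1 + ζ i) : ℝ) : ℂ) := by
      push_cast; rfl
    rw [hprod] at hζ2
    have hreal1 : (∏ i, ζ i) * PX = PY := by
      rw [← Complex.ofReal_mul] at hζ1; exact Complex.ofReal_inj.mp hζ1
    have hreal2 : PXY = PX * ∏ i, (1 + ζ i) := by
      rw [← Complex.ofReal_mul] at hζ2; exact Complex.ofReal_inj.mp hζ2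
    have hPXpos : 0 < PX := lt_of_le_of_ne hPX0 (Ne.symm hX0)
    have hL1 : 1 + (∏ i, ζ i) + ((2:ℝ)^k - 2) * ∏ i, Real.sqrt (ζ i)
        ≤ ∏ i, (1 + ζ i) := by
      have := scalar_L1 hk (fun _ => 1) ζ (fun _ => zero_le_one) hζ0
      simpa using this
    have hsq : ∏ i, Real.sqrt (ζ i) = Real.sqrt (∏ i, ζ i) := sqrt_prod ζ hζ0
    have hkey : PX * Real.sqrt (∏ i, ζ i) = Real.sqrt (PX * PY) := by
      have hpp : PX * PY = PX^2 * ∏ i, ζ i := by rw [← hreal1]; ring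
      rw [hpp, Real.sqrt_mul (sq_nonneg PX), Real.sqrt_sq hPX0]
    have hmul := mul_le_mul_of_nonneg_left hL1 hPX0
    rw [hreal2]
    calc PX + PY + ((2:ℝ)^k - 2) * Real.sqrt (PX * PY)
        = PX * (1 + (∏ i, ζ i) + ((2:ℝ)^k - 2) * ∏ i, Real.sqrt (ζ i)) := by
          rw [hsq]
          rw [show PX * (1 + (∏ i, ζ i) + ((2:ℝ)^k-2) * Real.sqrt (∏ i, ζ i))
            = PX + (∏ i, ζ i) * PX + ((2:ℝ)^k-2) * (PX * Real.sqrt (∏ i, ζ i)) by ring,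
            hreal1, hkey]
    _ ≤ PX * ∏ i, (1 + ζ i) := hmul

theorem prod_largest_eig_add_ge (n k : ℕ) (hn : 0 < n) (hk : 0 < k) (hkn : k ≤ n)
    (A B : Matrix (Fin n) (Fin n) ℂ) (hA : A.PosSemidef) (hB : B.PosSemidef) :
    ∏ t : Fin k, eigval (A + B) (Fin.castLE hkn t) ≥
      ∏ t : Fin k, eigval A (Fin.castLE hkn t) +
        ∏ t : Fin k, eigval B ((Fin.castLE hkn t).rev) +
        ((2 : ℝ) ^ k - 2) *
          ∏ t : Fin k, Real.sqrt (eigval A (Fin.castLE hkn t) *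
            eigval B ((Fin.castLE hkn t).rev)) := by
  classical
  have hAH : A.IsHermitian := hA.1
  have hBH : B.IsHermitian := hB.1
  have hABH : (A + B).IsHermitian := (hA.add hB).1
  set V : Matrix (Fin n) (Fin n) ℂ := (hAH.eigenvectorUnitary : Matrix (Fin n) (Fin n) ℂ)
    with hV
  set σ := Tuple.sort hAH.eigenvalues with hσ
  set e : Fin k → Fin n := fun t => σ ((Fin.castLE hkn t).rev) with he
  have heinj : Function.Injective e :=
    σ.injective.comp (Fin.rev_injective.comp (Fin.castLE_injective hkn))
  set U : Matrix (Fin n) (Fin k) ℂ := V.submatrix id e with hUdef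
  have keyconj : ∀ M' : Matrix (Fin n) (Fin n) ℂ,
      Uᴴ * M' * U = (Vᴴ * M' * V).submatrix e e := fun M' => submatrix_conj_mul V M' e
  have hVV : Vᴴ * V = 1 := unit1 hAH
  have hUU : Uᴴ * U = 1 := by
    have h := keyconj 1
    have h1 : Vᴴ * 1 * V = 1 := by rw [Matrix.mul_one]; exact hVV
    rw [h1, one_submatrix_inj heinj] at h
    rwa [Matrix.mul_one] at h
  set X : Matrix (Fin k) (Fin k) ℂ := Uᴴ * A * U with hXdef
  set Y : Matrix (Fin k) (Fin k) ℂ := Uᴴ * B * U with hYdef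
  have hXps : X.PosSemidef := hA.conjTranspose_mul_mul_same U
  have hYps : Y.PosSemidef := hB.conjTranspose_mul_mul_same U
  have hVAV : Vᴴ * A * V = diagonal (fun i => ((hAH.eigenvalues i : ℝ) : ℂ)) := herm_diag hAH
  have hXdiag : X = diagonal (fun t => ((eigval A (Fin.castLE hkn t) : ℝ) : ℂ)) := by
    rw [hXdef, keyconj A, hVAV, diagonal_submatrix_inj heinj]
    have hfun : ((fun i => ((hAH.eigenvalues i : ℝ) : ℂ)) ∘ e)
        = fun t => ((eigval A (Fin.castLE hkn t) : ℝ) : ℂ) := by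
      funext t
      simp only [Function.comp_apply]
      rw [eigval_eq hAH]
    rw [hfun]
  have hCsum : Uᴴ * (A + B) * U = X + Y := by
    rw [Matrix.mul_add, Matrix.add_mul]
  -- Step 1 : compression bound from above
  have step1 : ∏ t : Fin k, eigval (X + Y) t
      ≤ ∏ t : Fin k, eigval (A + B) (Fin.castLE hkn t) := by
    refine Finset.prod_le_prod (fun t _ => eigval_nonneg (hXps.add hYps) t) (fun t _ => ?_)
    have h := eigval_compression_le hkn hABH U hUU t
    rwa [hCsum] at h
  -- Step 2 : determinant inequality
  have step2 := det_add_psd hk X Y hXps hYps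
  -- identification of ∏ eigval X
  have hPXeq : ∏ t : Fin k, eigval X t = ∏ t : Fin k, eigval A (Fin.castLE hkn t) := by
    have h1 : ((∏ t : Fin k, eigval X t : ℝ) : ℂ)
        = ((∏ t : Fin k, eigval A (Fin.castLE hkn t) : ℝ) : ℂ) := by
      rw [← det_eq_prod_eigval hXps.1, hXdiag, Matrix.det_diagonal]
      push_cast
      rfl
    exact Complex.ofReal_inj.mp h1
  -- lower bound for ∏ eigval Y
  have hPB : ∏ t : Fin k, eigval B ((Fin.castLE hkn t).rev) ≤ ∏ t : Fin k, eigval Y t := by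
    have h2 : ∏ t : Fin k, eigval Y (Fin.revPerm t) = ∏ t : Fin k, eigval Y t :=
      Equiv.prod_comp Fin.revPerm (eigval Y)
    rw [← h2]
    refine Finset.prod_le_prod (fun t _ => eigval_nonneg hB _) (fun t _ => ?_)
    exact eigval_compression_ge hkn hBH U hUU t
  set PA := ∏ t : Fin k, eigval A (Fin.castLE hkn t) with hPA
  set PB := ∏ t : Fin k, eigval B ((Fin.castLE hkn t).rev) with hPBdef
  set PY := ∏ t : Fin k, eigval Y t with hPYdef
  have hPAnn : 0 ≤ PA := Finset.prod_nonneg fun t _ => eigval_nonneg hA _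
  have hPBnn : 0 ≤ PB := Finset.prod_nonneg fun t _ => eigval_nonneg hB _
  have hc : (0:ℝ) ≤ (2:ℝ)^k - 2 := by
    have : (2:ℝ)^1 ≤ 2^k := pow_le_pow_right₀ (by norm_num) hk
    simpa using this
  have hsqrtterm : ∏ t : Fin k, Real.sqrt (eigval A (Fin.castLE hkn t) *
      eigval B ((Fin.castLE hkn t).rev)) = Real.sqrt (PA * PB) := by
    rw [sqrt_prod _ (fun t => mul_nonneg (eigval_nonneg hA _) (eigval_nonneg hB _)),
      Finset.prod_mul_distrib]
  have hsqrtmono : Real.sqrt (PA * PB) ≤ Real.sqrt (PA * PY) :=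
    Real.sqrt_le_sqrt (mul_le_mul_of_nonneg_left hPB hPAnn)
  rw [ge_iff_le, hsqrtterm]
  rw [hPXeq] at step2
  calc PA + PB + ((2:ℝ)^k - 2) * Real.sqrt (PA * PB)
      ≤ PA + PY + ((2:ℝ)^k - 2) * Real.sqrt (PA * PY) := by
        have := mul_le_mul_of_nonneg_left hsqrtmono hc
        linarith
  _ ≤ ∏ t : Fin k, eigval (X + Y) t := step2
  _ ≤ ∏ t : Fin k, eigval (A + B) (Fin.castLE hkn t) := step1
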